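/- With φ the positive ground state, any eigenfunction v of L₊ = −d²/dx² + μ − 3φ² (Dirichlet on (0,1)) with eigenvalue 0 that is even about x = 1/2 and has exactly one zero in (0,1) must have that zero at x = 1/2, yielding a contradiction; hence no even eigenfunction for eigenvalue 0 with one interior zero exists. -/

import Mathlib

open Real Set intervalIntegral

/-- Domain of the Sturm–Liouville operators: C² functions with Dirichlet conditions. -/
def Dom2 (u : ℝ → ℝ) : Prop := ContDiff ℝ 2 u ∧ u 0 = 0 ∧ u 1 = 0

/-- The operator L₊ = −d²/dx² + μ − 3φ². -/
noncomputable def Lplus (μ : ℝ) (φ u : ℝ → ℝ) (x : ℝ) : ℝ :=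
  -(deriv (deriv u) x) + μ * u x - 3 * (φ x)^2 * u x

/-- There is no nontrivial eigenfunction of L₊ for eigenvalue 0 which is even
about x = 1/2 and has exactly one zero in (0,1). -/
theorem no_even_kernel_eigenfunction_with_one_zero (μ : ℝ) (hμ : 0 < μ) (φ : ℝ → ℝ)
    (hφreg : ContDiff ℝ 2 φ) (hφ0 : φ 0 = 0) (hφ1 : φ 1 = 0)
    (hφpos : ∀ x ∈ Set.Ioo (0:ℝ) 1, 0 < φ x)
    (hφode : ∀ x ∈ Set.Ioo (0:ℝ) 1,
      -(deriv (deriv φ) x) + μ * φ x - (φ x)^3 = 0)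
    (hφsym : ∀ x : ℝ, φ (1 - x) = φ x) :
    ¬ ∃ v : ℝ → ℝ, Dom2 v ∧ (∃ x ∈ Set.Icc (0:ℝ) 1, v x ≠ 0) ∧
        (∀ x ∈ Set.Ioo (0:ℝ) 1, Lplus μ φ v x = 0) ∧
        (∀ x : ℝ, v (1 - x) = v x) ∧
        (∃! x : ℝ, x ∈ Set.Ioo (0:ℝ) 1 ∧ v x = 0) := by
  rintro ⟨v, ⟨hv2, hv0, hv1⟩, ⟨xw, hxw, hvxw⟩, hode, hsym, x₀, ⟨hx₀mem, hvx₀⟩, huni⟩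
  -- regularity
  have hdiff : Differentiable ℝ v := hv2.differentiable (by norm_num)
  have hd2 : ContDiff ℝ 1 (deriv v) := by
    have h := (contDiff_succ_iff_deriv (n := 1)).mp (by exact_mod_cast hv2)
    exact h.2.2
  have hdiff' : Differentiable ℝ (deriv v) := hd2.differentiable one_ne_zero
  -- the unique zero is at 1/2
  have hx₀ : x₀ = (1/2 : ℝ) := by
    have hmem' : (1 - x₀) ∈ Set.Ioo (0:ℝ) 1 := ⟨by linarith [hx₀mem.2], by linarith [hx₀mem.1]⟩
    have := huni (1 - x₀) ⟨hmem', by rw [hsym]; exact hvx₀⟩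
    linarith
  have hvhalf : v (1/2 : ℝ) = 0 := hx₀ ▸ hvx₀
  -- the derivative vanishes at 1/2 by evenness
  have hdhalf : deriv v (1/2 : ℝ) = 0 := by
    have h12 : (1:ℝ) - 1/2 = 1/2 := by norm_num
    have h1 : HasDerivAt v (deriv v (1/2 : ℝ)) ((1:ℝ) - 1/2) := by
      rw [h12]; exact (hdiff (1/2 : ℝ)).hasDerivAt
    have h2 : HasDerivAt (fun x : ℝ => (1 : ℝ) - x) (-1) (1/2 : ℝ) :=
      ((hasDerivAt_id _).const_sub 1).congr_deriv (by norm_num)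
    have h3 : HasDerivAt (fun x : ℝ => v (1 - x)) (deriv v (1/2 : ℝ) * (-1)) (1/2 : ℝ) :=
      HasDerivAt.comp _ h1 h2
    have h4 : (fun x : ℝ => v (1 - x)) = v := funext hsym
    rw [h4] at h3
    have h5 := h3.deriv
    nlinarith [h5]
  -- bound the potential
  obtain ⟨C, hC⟩ := (isCompact_Icc (a := (0:ℝ)) (b := 1)).exists_bound_of_continuousOn
    hφreg.continuous.continuousOn
  have hC0 : (0:ℝ) ≤ C := le_trans (norm_nonneg _) (hC 0 (by norm_num))
  -- the clamped coefficient
  set σ : ℝ → ℝ := fun t => min 1 (max 0 t) with hσdef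
  set c : ℝ → ℝ := fun t => μ - 3 * (φ (σ t))^2 with hcdef
  have hσmem : ∀ t, σ t ∈ Set.Icc (0:ℝ) 1 := fun t =>
    ⟨le_min (by norm_num) (le_max_left _ _), min_le_left _ _⟩
  have hσid : ∀ t ∈ Set.Ioo (0:ℝ) 1, σ t = t := by
    intro t ht
    simp only [hσdef]
    rw [max_eq_right ht.1.le, min_eq_right ht.2.le]
  have hcbound : ∀ t, |c t| ≤ |μ| + 3 * C^2 := by
    intro t
    simp only [hcdef]
    have h1 : ‖φ (σ t)‖ ≤ C := hC _ (hσmem t)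
    have h2 : |φ (σ t)| ≤ C := h1
    have h3 : (φ (σ t))^2 ≤ C^2 := sq_le_sq' (by linarith [abs_le.mp h2]) (abs_le.mp h2).2
    have h4 : (0:ℝ) ≤ (φ (σ t))^2 := sq_nonneg _
    rw [abs_le]
    constructor
    · have := neg_abs_le μ
      nlinarith
    · have := le_abs_self μ
      nlinarith
  -- the Lipschitz field
  set K : NNReal := ⟨max 1 (|μ| + 3 * C^2), le_trans (by norm_num) (le_max_left _ _)⟩ with hKdef
  set V : ℝ → ℝ × ℝ → ℝ × ℝ := fun t p => (p.2, c t * p.1) with hVdef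
  have hlip : ∀ t, LipschitzWith K (V t) := by
    intro t
    apply LipschitzWith.of_dist_le_mul
    intro p q
    simp only [hVdef, Prod.dist_eq, Real.dist_eq]
    have hK : (K : ℝ) = max 1 (|μ| + 3 * C^2) := rfl
    rw [hK]
    have hd1 : |p.2 - q.2| ≤ max 1 (|μ| + 3 * C^2) * max |p.1 - q.1| |p.2 - q.2| := by
      calc |p.2 - q.2| ≤ max |p.1 - q.1| |p.2 - q.2| := le_max_right _ _
        _ = 1 * max |p.1 - q.1| |p.2 - q.2| := (one_mul _).symm
        _ ≤ max 1 (|μ| + 3 * C^2) * max |p.1 - q.1| |p.2 - q.2| :=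
            mul_le_mul_of_nonneg_right (le_max_left _ _) (le_max_of_le_left (abs_nonneg _))
    have hd2 : |c t * p.1 - c t * q.1| ≤ max 1 (|μ| + 3 * C^2) * max |p.1 - q.1| |p.2 - q.2| := by
      rw [← mul_sub, abs_mul]
      calc |c t| * |p.1 - q.1| ≤ (|μ| + 3 * C^2) * max |p.1 - q.1| |p.2 - q.2| :=
            mul_le_mul (hcbound t) (le_max_left _ _) (abs_nonneg _)
              (by positivity)
        _ ≤ max 1 (|μ| + 3 * C^2) * max |p.1 - q.1| |p.2 - q.2| :=
            mul_le_mul_of_nonneg_right (le_max_right _ _) (le_max_of_le_left (abs_nonneg _))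
    exact max_le hd1 hd2
  -- v vanishes on (0,1) by ODE uniqueness
  have hzero : ∀ t ∈ Set.Ioo (0:ℝ) 1, v t = 0 := by
    intro t ht
    have heq : Set.EqOn (fun t : ℝ => (v t, deriv v t)) (fun _ : ℝ => ((0:ℝ), (0:ℝ)))
        (Set.Ioo (0:ℝ) 1) := by
      apply ODE_solution_unique_of_mem_Ioo (s := fun _ => Set.univ)
        (fun t _ => (hlip t).lipschitzOnWith) (t₀ := (1/2 : ℝ)) (by norm_num)
      · intro t ht
        refine ⟨?_, Set.mem_univ _⟩
        have h1 : HasDerivAt v (deriv v t) t := (hdiff t).hasDerivAt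
        have h2 : HasDerivAt (deriv v) (deriv (deriv v) t) t := (hdiff' t).hasDerivAt
        have hodet := hode t ht
        simp only [Lplus] at hodet
        have h3 : deriv (deriv v) t = c t * v t := by
          simp only [hcdef]
          rw [hσid t ht]
          ring_nf
          nlinarith [hodet]
        have := h1.prodMk h2
        rw [h3] at this
        exact this
      · intro t ht
        refine ⟨?_, Set.mem_univ _⟩
        have : HasDerivAt (fun _ : ℝ => ((0:ℝ), (0:ℝ))) (0, 0) t := hasDerivAt_const _ _
        refine this.congr_deriv ?_
        simp [hVdef]
      · show ((v (1/2:ℝ), deriv v (1/2:ℝ)) : ℝ × ℝ) = (0, 0)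
        rw [hvhalf, hdhalf]
    have := heq ht
    exact congrArg Prod.fst this
  -- contradiction at the witness
  rcases hxw.1.lt_or_eq with h0 | h0
  · rcases hxw.2.lt_or_eq with h1 | h1
    · exact hvxw (hzero xw ⟨h0, h1⟩)
    · exact hvxw (h1 ▸ hv1)
  · exact hvxw (h0 ▸ hv0)
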